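/- Let k ≥ 2 and let P be the convex hull of the k+1 vertices u_j = (cos(2πj/(k+1)), sin(2πj/(k+1))), j = 0,…,k, of a regular (k+1)-gon. For every convex polygon Q ⊆ P that is the convex hull of at most k points there exists a vertex u_j of P with u_j ∉ Q such that ∠y u_j z ≤ (1 − 2/(k+1))·π for all y, z ∈ Q. In particular α(P,Q) ≤ (1 − 2/(k+1))·π for every convex k-gon Q inscribed in P. -/

import Mathlib

/-!
STATEMENT 2: Let k ≥ 2 and let P be the convex hull of the k+1 vertices
u_j = (cos(2πj/(k+1)), sin(2πj/(k+1))), j = 0,…,k, of a regular (k+1)-gon.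
For every convex polygon Q ⊆ P that is the convex hull of at most k points there
exists a vertex u_j of P with u_j ∉ Q such that ∠y u_j z ≤ (1 − 2/(k+1))·π for all
y, z ∈ Q.  In particular α(P,Q) ≤ (1 − 2/(k+1))·π for every convex k-gon Q
inscribed in P.
-/

noncomputable section

abbrev Pt := EuclideanSpace ℝ (Fin 2)

private lemma sin_lower_aux {a x : ℝ} (ha : 0 ≤ a) (h1 : a ≤ x) (h2 : x ≤ Real.pi - a) :
    Real.sin a ≤ Real.sin x := by
  have hmono := Real.strictMonoOn_sin.monotoneOn
  rcases le_or_gt x (Real.pi / 2) with h | h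
  · exact hmono ⟨by linarith [Real.pi_pos], by linarith⟩ ⟨by linarith [Real.pi_pos], h⟩ h1
  · rw [← Real.sin_pi_sub x]
    exact hmono ⟨by linarith [Real.pi_pos], by linarith⟩
      ⟨by linarith [Real.pi_pos], by linarith⟩ (by linarith)

private lemma angle_le_of_inner_aux {E : Type*} [NormedAddCommGroup E] [InnerProductSpace ℝ E]
    {v w : E} (hv : v ≠ 0) (hw : w ≠ 0) {θ : ℝ} (hθ0 : 0 ≤ θ) (hθ1 : θ ≤ Real.pi)
    (h : ‖v‖ * ‖w‖ * Real.cos θ ≤ (inner ℝ v w : ℝ)) :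
    InnerProductGeometry.angle v w ≤ θ := by
  by_contra hlt
  push_neg at hlt
  have hc : Real.cos (InnerProductGeometry.angle v w) < Real.cos θ :=
    Real.strictAntiOn_cos ⟨hθ0, hθ1⟩
      ⟨InnerProductGeometry.angle_nonneg v w, InnerProductGeometry.angle_le_pi v w⟩ hlt
  rw [InnerProductGeometry.cos_angle] at hc
  have hpos : 0 < ‖v‖ * ‖w‖ :=
    mul_pos (norm_pos_iff.mpr hv) (norm_pos_iff.mpr hw)
  rw [div_lt_iff₀ hpos] at hc
  nlinarith

private lemma inner_ge_of_cone_aux {E : Type*} [NormedAddCommGroup E] [InnerProductSpace ℝ E]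
    {b v w : E} (hb : ‖b‖ = 1) {c : ℝ} (hc0 : 0 ≤ c) (hc1 : c ≤ 1)
    (h1 : ‖v‖ * c ≤ (inner ℝ v b : ℝ)) (h2 : ‖w‖ * c ≤ (inner ℝ w b : ℝ)) :
    ‖v‖ * ‖w‖ * (2 * c ^ 2 - 1) ≤ (inner ℝ v w : ℝ) := by
  set cv : ℝ := inner ℝ v b with hcv
  set cw : ℝ := inner ℝ w b with hcw
  set v' : E := v - cv • b with hv'
  set w' : E := w - cw • b with hw'
  have hbb : (inner ℝ b b : ℝ) = 1 := by
    rw [real_inner_self_eq_norm_sq, hb]; norm_num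
  have hbw : (inner ℝ b w : ℝ) = cw := by rw [hcw]; exact (real_inner_comm b w).symm
  have hbv : (inner ℝ b v : ℝ) = cv := by rw [hcv]; exact (real_inner_comm b v).symm
  have hiv : (inner ℝ v' w' : ℝ) = inner ℝ v w - cv * cw := by
    simp only [hv', hw', inner_sub_left, inner_sub_right, real_inner_smul_left,
      real_inner_smul_right, hbb]
    rw [hbw, ← hcv]
    ring
  have hnv : ‖v'‖ ^ 2 = ‖v‖ ^ 2 - cv ^ 2 := by
    rw [← real_inner_self_eq_norm_sq, ← real_inner_self_eq_norm_sq]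
    simp only [hv', inner_sub_left, inner_sub_right, real_inner_smul_left,
      real_inner_smul_right, hbb]
    rw [hbv, ← hcv]
    ring
  have hnw : ‖w'‖ ^ 2 = ‖w‖ ^ 2 - cw ^ 2 := by
    rw [← real_inner_self_eq_norm_sq, ← real_inner_self_eq_norm_sq]
    simp only [hw', inner_sub_left, inner_sub_right, real_inner_smul_left,
      real_inner_smul_right, hbb]
    rw [hbw, ← hcw]
    ring
  have hcs : |(inner ℝ v' w' : ℝ)| ≤ ‖v'‖ * ‖w'‖ := abs_real_inner_le_norm v' w'
  have hv0 : 0 ≤ ‖v‖ * c := mul_nonneg (norm_nonneg _) hc0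
  have hw0 : 0 ≤ ‖w‖ * c := mul_nonneg (norm_nonneg _) hc0
  have hv2 : ‖v'‖ ^ 2 ≤ ‖v‖ ^ 2 * (1 - c ^ 2) := by
    rw [hnv]; nlinarith
  have hw2 : ‖w'‖ ^ 2 ≤ ‖w‖ ^ 2 * (1 - c ^ 2) := by
    rw [hnw]; nlinarith
  have hA : ‖v'‖ * ‖w'‖ ≤ ‖v‖ * ‖w‖ * (1 - c ^ 2) := by
    have h1c : (0:ℝ) ≤ 1 - c ^ 2 := by nlinarith
    have hs : (‖v'‖ * ‖w'‖) ^ 2 ≤ (‖v‖ * ‖w‖ * (1 - c ^ 2)) ^ 2 := by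
      have := mul_le_mul hv2 hw2 (sq_nonneg _) (by positivity)
      calc (‖v'‖ * ‖w'‖) ^ 2 = ‖v'‖ ^ 2 * ‖w'‖ ^ 2 := by ring
        _ ≤ ‖v‖ ^ 2 * (1 - c ^ 2) * (‖w‖ ^ 2 * (1 - c ^ 2)) := this
        _ = (‖v‖ * ‖w‖ * (1 - c ^ 2)) ^ 2 := by ring
    have hr : (0:ℝ) ≤ ‖v‖ * ‖w‖ * (1 - c ^ 2) := by positivity
    nlinarith [mul_nonneg (norm_nonneg v') (norm_nonneg w')]
  have hlow : -(‖v‖ * ‖w‖ * (1 - c ^ 2)) ≤ (inner ℝ v' w' : ℝ) := by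
    have := neg_abs_le (inner ℝ v' w' : ℝ)
    linarith
  have hprod : ‖v‖ * ‖w‖ * c ^ 2 ≤ cv * cw := by
    have := mul_le_mul h1 h2 hw0 (le_trans hv0 h1)
    nlinarith
  have e1 : ‖v‖ * ‖w‖ * (2 * c ^ 2 - 1)
      = ‖v‖ * ‖w‖ * c ^ 2 - ‖v‖ * ‖w‖ * (1 - c ^ 2) := by ring
  linarith [hiv, hprod, hlow]

private lemma hull_cone_aux {p b : Pt} {c : ℝ} (hc : 0 ≤ c) {s : Set Pt}
    (h : ∀ x ∈ s, ‖x - p‖ * c ≤ (inner ℝ (x - p) b : ℝ)) :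
    ∀ x ∈ convexHull ℝ s, ‖x - p‖ * c ≤ (inner ℝ (x - p) b : ℝ) := by
  have hconv : Convex ℝ {x : Pt | ‖x - p‖ * c ≤ (inner ℝ (x - p) b : ℝ)} := by
    intro x hx y hy a a' ha ha' hab
    simp only [Set.mem_setOf_eq] at hx hy ⊢
    have hxy : a • x + a' • y - p = a • (x - p) + a' • (y - p) := by
      calc a • x + a' • y - p = a • x + a' • y - (a + a') • p := by rw [hab, one_smul]
        _ = a • (x - p) + a' • (y - p) := by rw [add_smul, smul_sub, smul_sub]; abel
    have hn : ‖a • x + a' • y - p‖ ≤ a * ‖x - p‖ + a' * ‖y - p‖ := by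
      rw [hxy]
      refine (norm_add_le _ _).trans ?_
      rw [norm_smul, norm_smul, Real.norm_eq_abs, Real.norm_eq_abs,
        abs_of_nonneg ha, abs_of_nonneg ha']
    have hi : (inner ℝ (a • x + a' • y - p) b : ℝ)
        = a * inner ℝ (x - p) b + a' * inner ℝ (y - p) b := by
      rw [hxy, inner_add_left, real_inner_smul_left, real_inner_smul_left]
    rw [hi]
    calc ‖a • x + a' • y - p‖ * c ≤ (a * ‖x - p‖ + a' * ‖y - p‖) * c :=
          mul_le_mul_of_nonneg_right hn hc
      _ = a * (‖x - p‖ * c) + a' * (‖y - p‖ * c) := by ring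
      _ ≤ a * inner ℝ (x - p) b + a' * inner ℝ (y - p) b :=
          add_le_add (mul_le_mul_of_nonneg_left hx ha) (mul_le_mul_of_nonneg_left hy ha')
  exact convexHull_min h hconv

set_option maxHeartbeats 1000000 in

theorem regular_polygon_aperture_upper_bound (k : ℕ) (hk : 2 ≤ k)
    (u : Fin (k + 1) → Pt)
    (hu : ∀ j : Fin (k + 1),
      u j 0 = Real.cos (2 * Real.pi * (j : ℕ) / ((k : ℝ) + 1)) ∧
      u j 1 = Real.sin (2 * Real.pi * (j : ℕ) / ((k : ℝ) + 1)))
    (T : Finset Pt) (hT : T.card ≤ k)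
    (hQP : convexHull ℝ (T : Set Pt) ⊆ convexHull ℝ (Set.range u)) :
    ∃ j : Fin (k + 1), u j ∉ convexHull ℝ (T : Set Pt) ∧
      ∀ y ∈ convexHull ℝ (T : Set Pt), ∀ z ∈ convexHull ℝ (T : Set Pt),
        EuclideanGeometry.angle y (u j) z ≤ (1 - 2 / ((k : ℝ) + 1)) * Real.pi := by
  have hpi := Real.pi_pos
  have hk1 : (0:ℝ) < (k:ℝ) + 1 := by positivity
  have hkR : (2:ℝ) ≤ (k:ℝ) := by exact_mod_cast hk
  -- inner products of vertices
  have hinner : ∀ i j : Fin (k+1), (inner ℝ (u i) (u j) : ℝ)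
      = Real.cos (2*Real.pi*((i:ℕ):ℝ)/((k:ℝ)+1) - 2*Real.pi*((j:ℕ):ℝ)/((k:ℝ)+1)) := by
    intro i j
    rw [Real.cos_sub]
    have h1 := hu i
    have h2 := hu j
    simp [PiLp.inner_apply, Fin.sum_univ_two, RCLike.inner_apply, h1.1, h1.2, h2.1, h2.2]; ring
  have hnorm1 : ∀ j, ‖u j‖ = 1 := by
    intro j
    have h : (inner ℝ (u j) (u j) : ℝ) = 1 := by
      rw [hinner j j, sub_self, Real.cos_zero]
    have h2 : ‖u j‖ ^ 2 = 1 := by rw [← real_inner_self_eq_norm_sq, h]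
    rw [← Real.sqrt_sq (norm_nonneg (u j)), h2, Real.sqrt_one]
  -- injectivity
  have hinj : Function.Injective u := by
    intro i j hij
    have h1 : (inner ℝ (u i) (u j) : ℝ) = 1 := by
      rw [hij, real_inner_self_eq_norm_sq, hnorm1 j]; norm_num
    have h2 : Real.cos (2*Real.pi*((i:ℕ):ℝ)/((k:ℝ)+1) - 2*Real.pi*((j:ℕ):ℝ)/((k:ℝ)+1)) = 1 :=
      (hinner i j).symm.trans h1
    have hi : ((i:ℕ):ℝ) ≤ (k:ℝ) := by exact_mod_cast Nat.lt_succ_iff.mp i.isLt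
    have hj : ((j:ℕ):ℝ) ≤ (k:ℝ) := by exact_mod_cast Nat.lt_succ_iff.mp j.isLt
    have hi0 : (0:ℝ) ≤ ((i:ℕ):ℝ) := Nat.cast_nonneg _
    have hj0 : (0:ℝ) ≤ ((j:ℕ):ℝ) := Nat.cast_nonneg _
    have e : 2*Real.pi*((i:ℕ):ℝ)/((k:ℝ)+1) - 2*Real.pi*((j:ℕ):ℝ)/((k:ℝ)+1)
        = 2*Real.pi*(((i:ℕ):ℝ) - ((j:ℕ):ℝ))/((k:ℝ)+1) := by ring
    rw [e] at h2
    have hub : 2*Real.pi*(((i:ℕ):ℝ) - ((j:ℕ):ℝ))/((k:ℝ)+1) < 2*Real.pi := by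
      rw [div_lt_iff₀ hk1]; nlinarith
    have hlb : -(2*Real.pi) < 2*Real.pi*(((i:ℕ):ℝ) - ((j:ℕ):ℝ))/((k:ℝ)+1) := by
      rw [lt_div_iff₀ hk1]; nlinarith
    have hz := (Real.cos_eq_one_iff_of_lt_of_lt hlb hub).mp h2
    have hd0 : ((i:ℕ):ℝ) - ((j:ℕ):ℝ) = 0 := by
      by_contra hne
      exact (div_ne_zero (mul_ne_zero (by positivity) hne) (ne_of_gt hk1)) hz
    have : ((i:ℕ):ℝ) = ((j:ℕ):ℝ) := by linarith
    have : (i:ℕ) = (j:ℕ) := by exact_mod_cast this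
    exact Fin.ext this
  -- vertices are on the unit sphere; hull inside unit ball
  have hball : ∀ x ∈ convexHull ℝ (Set.range u), ‖x‖ ≤ 1 := by
    intro x hx
    have hsub : convexHull ℝ (Set.range u) ⊆ Metric.closedBall (0:Pt) 1 := by
      apply convexHull_min _ (convex_closedBall _ _)
      rintro _ ⟨i, rfl⟩
      simp [Metric.mem_closedBall, dist_zero_right, hnorm1 i]
    simpa [mem_closedBall_zero_iff] using hsub hx
  -- a vertex in the hull of T must be a point of T
  have hmemT : ∀ j : Fin (k+1), u j ∈ convexHull ℝ (T : Set Pt) → u j ∈ T := by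
    intro j hj
    by_contra hnot
    have hstrict : ∀ t ∈ (T : Set Pt), (inner ℝ (u j) t : ℝ) < 1 := by
      intro t ht
      have hle : ‖t‖ ≤ 1 := hball t (hQP (subset_convexHull ℝ _ ht))
      have hcs := real_inner_le_norm (u j) t
      rw [hnorm1 j, one_mul] at hcs
      rcases lt_or_eq_of_le (le_trans hcs hle) with h | h
      · exact h
      · exfalso
        have htn : ‖t‖ = 1 := le_antisymm hle (by linarith)
        have := (inner_eq_one_iff_of_norm_eq_one (hnorm1 j) htn).mp h
        exact hnot (this ▸ ht)
    have hsub : convexHull ℝ (T : Set Pt) ⊆ {x : Pt | (inner ℝ (u j) x : ℝ) < 1} := by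
      apply convexHull_min hstrict
      exact convex_halfSpace_lt (f := fun x : Pt => (inner ℝ (u j) x : ℝ))
        ⟨fun a b => inner_add_right _ _ _,
         fun r a => by simp [real_inner_smul_right, smul_eq_mul]⟩ 1
    have hlt := hsub hj
    simp only [Set.mem_setOf_eq] at hlt
    rw [real_inner_self_eq_norm_sq, hnorm1 j] at hlt
    norm_num at hlt
  -- pigeonhole: some vertex is outside Q
  have hX : ∃ j : Fin (k+1), u j ∉ convexHull ℝ (T : Set Pt) := by
    by_contra h
    push_neg at h
    have hcard : k + 1 ≤ T.card := by
      have h2 := Finset.card_le_card_of_injOn (s := (Finset.univ : Finset (Fin (k+1)))) u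
        (fun a _ => hmemT a (h a)) (hinj.injOn)
      simpa using h2
    omega
  obtain ⟨j, hj⟩ := hX
  -- the cone bound at vertex j
  have hsa0 : (0:ℝ) ≤ Real.sin (Real.pi/((k:ℝ)+1)) :=
    Real.sin_nonneg_of_nonneg_of_le_pi (by positivity)
      (div_le_self hpi.le (by linarith))
  have hchord : ∀ i : Fin (k+1), i ≠ j →
      ‖u i - u j‖ * Real.sin (Real.pi/((k:ℝ)+1)) ≤ (inner ℝ (u i - u j) (-(u j)) : ℝ) := by
    intro i hij
    set δ : ℝ := Real.pi * (((i:ℕ):ℝ) - ((j:ℕ):ℝ)) / ((k:ℝ)+1) with hδ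
    have hcos : (inner ℝ (u i) (u j) : ℝ) = Real.cos (2*δ) := by
      rw [hinner i j]; congr 1; rw [hδ]; ring
    have hiuj : (inner ℝ (u i - u j) (-(u j)) : ℝ) = 1 - Real.cos (2*δ) := by
      rw [inner_sub_left, inner_neg_right, inner_neg_right, hcos,
        real_inner_self_eq_norm_sq, hnorm1 j]
      ring
    have hsin2 : 1 - Real.cos (2*δ) = 2 * Real.sin δ ^ 2 := by
      rw [Real.cos_two_mul]
      nlinarith [Real.sin_sq_add_cos_sq δ]
    have hnsq : ‖u i - u j‖ ^ 2 = 4 * Real.sin δ ^ 2 := by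
      rw [← real_inner_self_eq_norm_sq, inner_sub_left, inner_sub_right, inner_sub_right,
        real_inner_self_eq_norm_sq, real_inner_self_eq_norm_sq, hnorm1 i, hnorm1 j,
        real_inner_comm (u i) (u j), hcos, Real.cos_two_mul]
      nlinarith [Real.sin_sq_add_cos_sq δ]
    have hnn : ‖u i - u j‖ = 2 * |Real.sin δ| := by
      rw [← Real.sqrt_sq (norm_nonneg (u i - u j)), hnsq,
        show (4:ℝ) * Real.sin δ ^ 2 = (2*|Real.sin δ|)^2 by rw [mul_pow, sq_abs]; ring]
      exact Real.sqrt_sq (by positivity)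
    -- integer distance bounds
    set m : ℤ := ((i:ℕ):ℤ) - ((j:ℕ):ℤ) with hm
    have hijv : (i:ℕ) ≠ (j:ℕ) := fun h => hij (Fin.ext h)
    have hiL : (i:ℕ) < k + 1 := i.isLt
    have hjL : (j:ℕ) < k + 1 := j.isLt
    have hm0 : m ≠ 0 := by omega
    have hm1 : 1 ≤ |m| := Int.one_le_abs hm0
    have hm2 : |m| ≤ (k:ℤ) := abs_le.mpr ⟨by omega, by omega⟩
    have em : ((i:ℕ):ℝ) - ((j:ℕ):ℝ) = (m:ℝ) := by push_cast [hm]; ring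
    have habs : |δ| = Real.pi * |(m:ℝ)| / ((k:ℝ)+1) := by
      rw [hδ, em, abs_div, abs_mul, abs_of_pos hpi, abs_of_pos hk1]
    have hm1R : (1:ℝ) ≤ |(m:ℝ)| := by exact_mod_cast hm1
    have hm2R : |(m:ℝ)| ≤ (k:ℝ) := by exact_mod_cast hm2
    have hdlo : Real.pi/((k:ℝ)+1) ≤ |δ| := by
      rw [habs]
      gcongr
      nlinarith
    have hdhi : |δ| ≤ Real.pi - Real.pi/((k:ℝ)+1) := by
      have e2 : Real.pi - Real.pi/((k:ℝ)+1) = Real.pi*(k:ℝ)/((k:ℝ)+1) := by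
        field_simp
        ring
      rw [habs, e2]
      gcongr
    have hsb : Real.sin (Real.pi/((k:ℝ)+1)) ≤ |Real.sin δ| := by
      have hfrac : (0:ℝ) ≤ Real.pi/((k:ℝ)+1) := by positivity
      have hδpi : |δ| ≤ Real.pi := by linarith
      have h1 : |Real.sin δ| = Real.sin |δ| := by
        rcases le_or_gt 0 δ with h | h
        · have hud : δ ≤ Real.pi := by rwa [abs_of_nonneg h] at hδpi
          rw [abs_of_nonneg h,
            abs_of_nonneg (Real.sin_nonneg_of_nonneg_of_le_pi h hud)]
        · have hnd : (0:ℝ) ≤ -δ := by linarith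
          have hpd : -δ ≤ Real.pi := by rwa [abs_of_neg h] at hδpi
          have hs : 0 ≤ Real.sin (-δ) := Real.sin_nonneg_of_nonneg_of_le_pi hnd hpd
          rw [Real.sin_neg] at hs
          rw [abs_of_neg h, Real.sin_neg, abs_of_nonpos (by linarith)]
      rw [h1]
      exact sin_lower_aux (by positivity) hdlo hdhi
    calc ‖u i - u j‖ * Real.sin (Real.pi/((k:ℝ)+1))
        = 2 * |Real.sin δ| * Real.sin (Real.pi/((k:ℝ)+1)) := by rw [hnn]
      _ ≤ 2 * |Real.sin δ| * |Real.sin δ| :=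
          mul_le_mul_of_nonneg_left hsb (by positivity)
      _ = 2 * Real.sin δ ^ 2 := by rw [← sq_abs (Real.sin δ)]; ring
      _ = (inner ℝ (u i - u j) (-(u j)) : ℝ) := by rw [hiuj, hsin2]
  have hcone : ∀ x ∈ convexHull ℝ (Set.range u),
      ‖x - u j‖ * Real.sin (Real.pi/((k:ℝ)+1)) ≤ (inner ℝ (x - u j) (-(u j)) : ℝ) := by
    apply hull_cone_aux hsa0
    rintro x ⟨i, rfl⟩
    by_cases hij : i = j
    · subst hij; simp
    · exact hchord i hij
  refine ⟨j, hj, ?_⟩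
  intro y hy z hz
  have hyu : y - u j ≠ 0 := by
    intro h; rw [sub_eq_zero] at h; exact hj (h ▸ hy)
  have hzu : z - u j ≠ 0 := by
    intro h; rw [sub_eq_zero] at h; exact hj (h ▸ hz)
  have h2k : 2/((k:ℝ)+1) ≤ 1 := by
    rw [div_le_one hk1]; linarith
  have hθ0 : 0 ≤ (1 - 2/((k:ℝ)+1)) * Real.pi := by
    apply mul_nonneg (by linarith) hpi.le
  have hθπ : (1 - 2/((k:ℝ)+1)) * Real.pi ≤ Real.pi := by
    nlinarith [div_pos (by norm_num : (0:ℝ) < 2) hk1]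
  have hangle : EuclideanGeometry.angle y (u j) z
      = InnerProductGeometry.angle (y - u j) (z - u j) := by
    rw [EuclideanGeometry.angle, vsub_eq_sub, vsub_eq_sub]
  rw [hangle]
  apply angle_le_of_inner_aux hyu hzu hθ0 hθπ
  have hcosθ : Real.cos ((1 - 2/((k:ℝ)+1)) * Real.pi)
      = 2 * Real.sin (Real.pi/((k:ℝ)+1)) ^ 2 - 1 := by
    have e : (1 - 2/((k:ℝ)+1)) * Real.pi = Real.pi - 2 * (Real.pi/((k:ℝ)+1)) := by ring
    rw [e, Real.cos_pi_sub, Real.cos_two_mul]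
    nlinarith [Real.sin_sq_add_cos_sq (Real.pi/((k:ℝ)+1))]
  rw [hcosθ]
  have hb1 : ‖-(u j)‖ = 1 := by rw [norm_neg, hnorm1 j]
  exact inner_ge_of_cone_aux hb1 hsa0 (Real.sin_le_one _)
    (hcone y (hQP hy)) (hcone z (hQP hz))
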